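/- In the self-consistent (Kaplan–Meier) estimator setup with data e_1, …, e_n and indicators δ_1, …, δ_n ∈ {0,1} satisfying δ_i = 1 whenever e_i = max_j e_j, the sum of the Wilcoxon imputed mid-ranks is n/2; that is, ∑_{i=1}^n [ δ_i·(F̂(e_i) + F̂(e_i⁻))/2 + (1 − δ_i)·(1 − (1 − F̂(e_i))/2) ] = n/2. -/

import Mathlib

open Finset
open scoped Classical

/-- Number at risk at `v`: `Y(v) = #{j : e_j ≥ v}` (as a real number). -/
noncomputable def kmY {n : ℕ} (e : Fin n → ℝ) (v : ℝ) : ℝ :=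
  ((Finset.univ.filter fun j => v ≤ e j).card : ℝ)

/-- Number of (uncensored) events at `v`: `d(v) = #{i : e_i = v ∧ δ_i = 1}`. -/
noncomputable def kmD {n : ℕ} (e : Fin n → ℝ) (δ : Fin n → ℝ) (v : ℝ) : ℝ :=
  ((Finset.univ.filter fun i => e i = v ∧ δ i = 1).card : ℝ)

/-- Self-consistent (Kaplan–Meier) estimator:
`F̂(t) = 1 − ∏_{v ∈ V, v ≤ t} (1 − d(v)/Y(v))`, `V` the set of distinct data values. -/
noncomputable def kmF {n : ℕ} (e : Fin n → ℝ) (δ : Fin n → ℝ) (t : ℝ) : ℝ :=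
  1 - ∏ v ∈ (Finset.univ.image e).filter (fun v => v ≤ t), (1 - kmD e δ v / kmY e v)

/-- Left limit of the self-consistent estimator:
`F̂(t⁻) = 1 − ∏_{v ∈ V, v < t} (1 − d(v)/Y(v))`. -/
noncomputable def kmFminus {n : ℕ} (e : Fin n → ℝ) (δ : Fin n → ℝ) (t : ℝ) : ℝ :=
  1 - ∏ v ∈ (Finset.univ.image e).filter (fun v => v < t), (1 - kmD e δ v / kmY e v)

lemma km_key (Y m d : ℝ → ℝ) (V : Finset ℝ)
    (hY : ∀ v ∈ V, Y v = ∑ w ∈ V.filter (fun w => v ≤ w), m w)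
    (hY0 : ∀ v ∈ V, Y v ≠ 0) :
    ∑ v ∈ V, (m v * ∏ w ∈ V.filter (fun w => w ≤ v), (1 - d w / Y w)
            + d v * ∏ w ∈ V.filter (fun w => w < v), (1 - d w / Y w))
      = ∑ v ∈ V, m v := by
  induction V using Finset.strongInduction with
  | _ V ih =>
  rcases V.eq_empty_or_nonempty with rfl | hne
  · simp
  set v₀ := V.min' hne with hv₀def
  have hv₀V : v₀ ∈ V := V.min'_mem hne
  have hle : ∀ v ∈ V, v₀ ≤ v := fun v hv => V.min'_le v hv
  set V' := V.erase v₀ with hV'def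
  have hlt : ∀ v ∈ V', v₀ < v := by
    intro v hv
    exact lt_of_le_of_ne (hle v (mem_of_mem_erase hv)) (Ne.symm (ne_of_mem_erase hv))
  have hssub : V' ⊂ V := erase_ssubset hv₀V
  have hf1 : V.filter (fun w => w ≤ v₀) = {v₀} := by
    ext w
    simp only [mem_filter, mem_singleton]
    constructor
    · rintro ⟨hw, hw2⟩; exact le_antisymm hw2 (hle w hw)
    · rintro rfl; exact ⟨hv₀V, le_refl _⟩
  have hf2 : V.filter (fun w => w < v₀) = ∅ := by
    apply filter_eq_empty_iff.mpr
    intro w hw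
    exact not_lt.mpr (hle w hw)
  have hf3 : ∀ v ∈ V', V.filter (fun w => w ≤ v) = insert v₀ (V'.filter (fun w => w ≤ v)) := by
    intro v hv
    rw [hV'def, filter_erase, insert_erase]
    exact mem_filter.mpr ⟨hv₀V, (hlt v hv).le⟩
  have hf4 : ∀ v ∈ V', V.filter (fun w => w < v) = insert v₀ (V'.filter (fun w => w < v)) := by
    intro v hv
    rw [hV'def, filter_erase, insert_erase]
    exact mem_filter.mpr ⟨hv₀V, hlt v hv⟩
  have hnotmem : ∀ p : ℝ → Prop, v₀ ∉ V'.filter (fun w => p w) := by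
    intro p h
    exact (notMem_erase v₀ V) (mem_of_mem_filter _ h)
  have hYV' : ∀ v ∈ V', Y v = ∑ w ∈ V'.filter (fun w => v ≤ w), m w := by
    intro v hv
    rw [hY v (mem_of_mem_erase hv), hV'def, filter_erase, erase_eq_of_notMem]
    intro hmem
    exact absurd (mem_filter.mp hmem).2 (not_le.mpr (hlt v hv))
  have hY0' : ∀ v ∈ V', Y v ≠ 0 := fun v hv => hY0 v (mem_of_mem_erase hv)
  have IH := ih V' hssub hYV' hY0'
  set c : ℝ := 1 - d v₀ / Y v₀ with hc
  rw [← Finset.sum_erase_add V _ hv₀V, ← Finset.sum_erase_add V m hv₀V, ← hV'def]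
  have hterm0 : m v₀ * ∏ w ∈ V.filter (fun w => w ≤ v₀), (1 - d w / Y w)
      + d v₀ * ∏ w ∈ V.filter (fun w => w < v₀), (1 - d w / Y w) = m v₀ * c + d v₀ := by
    rw [hf1, hf2]; simp [hc]
  rw [hterm0]
  have hsum' : ∑ v ∈ V', (m v * ∏ w ∈ V.filter (fun w => w ≤ v), (1 - d w / Y w)
            + d v * ∏ w ∈ V.filter (fun w => w < v), (1 - d w / Y w))
      = c * ∑ v ∈ V', m v := by
    rw [← IH, Finset.mul_sum]
    apply Finset.sum_congr rfl
    intro v hv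
    rw [hf3 v hv, hf4 v hv, Finset.prod_insert (hnotmem _), Finset.prod_insert (hnotmem _)]
    ring
  rw [hsum']
  have hYsum : Y v₀ = m v₀ + ∑ v ∈ V', m v := by
    rw [hY v₀ hv₀V]
    have : V.filter (fun w => v₀ ≤ w) = V := filter_eq_self.mpr (fun w hw => hle w hw)
    rw [this, ← Finset.sum_erase_add V m hv₀V, ← hV'def]
    ring
  have hY0v := hY0 v₀ hv₀V
  have hcY : c * Y v₀ = Y v₀ - d v₀ := by
    rw [hc]; field_simp
  have : ∑ v ∈ V', m v = Y v₀ - m v₀ := by linarith [hYsum]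
  rw [this]
  nlinarith [hcY, hYsum]

/-- Theorem 2 (rank-sum identity for the Wilcoxon score): with `δ_i = 1` whenever
`e_i` is the largest observation, the Wilcoxon imputed mid-ranks
`δ_i·(F̂(e_i)+F̂(e_i⁻))/2 + (1−δ_i)·(1 − (1 − F̂(e_i))/2)` sum to `n/2`. -/
theorem wilcoxon_rank_sum (n : ℕ) (hn : 1 ≤ n) (e : Fin n → ℝ) (δ : Fin n → ℝ)
    (hδ : ∀ i, δ i = 0 ∨ δ i = 1)
    (hmax : ∀ i, (∀ j, e j ≤ e i) → δ i = 1) :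
    ∑ i, (δ i * ((kmF e δ (e i) + kmFminus e δ (e i)) / 2)
        + (1 - δ i) * (1 - (1 - kmF e δ (e i)) / 2)) = n / 2 := by
  classical
  set V := (Finset.univ.image e) with hV
  set S : ℝ → ℝ := fun t => ∏ v ∈ V.filter (fun v => v ≤ t), (1 - kmD e δ v / kmY e v) with hS
  set Sm : ℝ → ℝ := fun t => ∏ v ∈ V.filter (fun v => v < t), (1 - kmD e δ v / kmY e v) with hSm
  set m : ℝ → ℝ := fun v => ((Finset.univ.filter fun i => e i = v).card : ℝ) with hm
  -- Y identity
  have hY : ∀ v ∈ V, kmY e v = ∑ w ∈ V.filter (fun w => v ≤ w), m w := by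
    intro v _
    rw [kmY, Finset.card_eq_sum_card_fiberwise
      (f := e) (t := V.filter (fun w => v ≤ w))
      (fun j hj => mem_filter.mpr ⟨mem_image_of_mem e (mem_univ j), (mem_filter.mp hj).2⟩)]
    push_cast
    apply Finset.sum_congr rfl
    intro w hw
    congr 2
    ext j
    simp only [mem_filter, mem_univ, true_and]
    constructor
    · rintro ⟨_, h⟩; exact h
    · rintro rfl; exact ⟨(mem_filter.mp hw).2, rfl⟩
  have hY0 : ∀ v ∈ V, kmY e v ≠ 0 := by
    intro v hv
    obtain ⟨i, _, hi⟩ := mem_image.mp hv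
    have : i ∈ Finset.univ.filter fun j => v ≤ e j := mem_filter.mpr ⟨mem_univ i, hi.ge⟩
    rw [kmY]
    exact_mod_cast Finset.card_ne_zero_of_mem this
  -- d identity
  have hD : ∀ v : ℝ, kmD e δ v = ∑ i ∈ Finset.univ.filter (fun i => e i = v), δ i := by
    intro v
    rw [kmD]
    have h1 : (Finset.univ.filter fun i => e i = v ∧ δ i = 1)
        = (Finset.univ.filter fun i => e i = v).filter (fun i => δ i = 1) := by
      rw [filter_filter]
    rw [h1, ← Finset.sum_boole]
    apply Finset.sum_congr rfl
    intro i _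
    rcases hδ i with h | h <;> simp [h]
  -- n identity
  have hnsum : (n : ℝ) = ∑ v ∈ V, m v := by
    have := Finset.card_eq_sum_card_fiberwise
      (f := e) (s := (Finset.univ : Finset (Fin n))) (t := V)
      (fun j _ => mem_image_of_mem e (mem_univ j))
    rw [card_univ, Fintype.card_fin] at this
    rw [hm]
    push_cast
    exact_mod_cast this
  have key := km_key (kmY e) m (kmD e δ) V hY hY0
  -- rewrite each summand
  have hterm : ∀ i, δ i * ((kmF e δ (e i) + kmFminus e δ (e i)) / 2)
      + (1 - δ i) * (1 - (1 - kmF e δ (e i)) / 2)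
      = 1 - (S (e i) + δ i * Sm (e i)) / 2 := by
    intro i
    have h1 : kmF e δ (e i) = 1 - S (e i) := rfl
    have h2 : kmFminus e δ (e i) = 1 - Sm (e i) := rfl
    rw [h1, h2]; ring
  calc ∑ i, (δ i * ((kmF e δ (e i) + kmFminus e δ (e i)) / 2)
        + (1 - δ i) * (1 - (1 - kmF e δ (e i)) / 2))
      = ∑ i : Fin n, (1 - (S (e i) + δ i * Sm (e i)) / 2) := by
        exact Finset.sum_congr rfl fun i _ => hterm i
    _ = (n : ℝ) - (∑ i : Fin n, (S (e i) + δ i * Sm (e i))) / 2 := by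
        rw [Finset.sum_sub_distrib, Finset.sum_const, card_univ, Fintype.card_fin,
          ← Finset.sum_div]
        simp
    _ = (n : ℝ) - (n : ℝ) / 2 := by
        congr 1
        have hsplit : ∑ i : Fin n, (S (e i) + δ i * Sm (e i))
            = ∑ v ∈ V, ∑ i ∈ Finset.univ.filter (fun i => e i = v), (S (e i) + δ i * Sm (e i)) :=
          (Finset.sum_fiberwise_of_maps_to (fun j _ => mem_image_of_mem e (mem_univ j)) _).symm
        rw [hsplit]
        have hinner : ∀ v ∈ V, ∑ i ∈ Finset.univ.filter (fun i => e i = v),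
            (S (e i) + δ i * Sm (e i)) = m v * S v + kmD e δ v * Sm v := by
          intro v _
          have : ∀ i ∈ Finset.univ.filter (fun i => e i = v),
              S (e i) + δ i * Sm (e i) = S v + δ i * Sm v := by
            intro i hi
            rw [(mem_filter.mp hi).2]
          rw [Finset.sum_congr rfl this, Finset.sum_add_distrib, Finset.sum_const,
            ← Finset.sum_mul, ← hD v, hm]
          simp [nsmul_eq_mul]
        rw [Finset.sum_congr rfl hinner]
        rw [hnsum]
        exact congrArg (· / 2) key
    _ = (n : ℝ) / 2 := by ring
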